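/- For any integer K ≥ 1 and p ∈ (0,1], the sharper bound h(K,p) ≤ 6/((K+1)(K+2)·p²) holds, where h(K,p) = Σ_{k=1}^{K} (1/k²) · C(K,k) p^k (1-p)^{K-k}. -/

import Mathlib

theorem stmt_2 (K : ℕ) (hK : 1 ≤ K) (p : ℝ) (hp : 0 < p) (hp1 : p ≤ 1) :
    ∑ k ∈ Finset.Icc 1 K,
      (1 / (k : ℝ) ^ 2) * (K.choose k : ℝ) * p ^ k * (1 - p) ^ (K - k)
      ≤ 6 / (((K : ℝ) + 1) * ((K : ℝ) + 2) * p ^ 2) := by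
  have h1p : (0:ℝ) ≤ 1 - p := by linarith
  have hKK : (0:ℝ) < ((K:ℝ)+1)*((K:ℝ)+2) := by positivity
  set c : ℝ := 6 / (((K : ℝ) + 1) * ((K : ℝ) + 2) * p ^ 2) with hc
  have hcpos : 0 < c := by rw [hc]; positivity
  set g : ℕ → ℝ := fun j => ((K+2).choose j : ℝ) * p ^ j * (1 - p) ^ (K + 2 - j) with hg
  have hgnn : ∀ j, 0 ≤ g j := fun j => by
    simp only [hg]; positivity
  -- termwise bound
  have step1 : ∑ k ∈ Finset.Icc 1 K,
      (1 / (k : ℝ) ^ 2) * (K.choose k : ℝ) * p ^ k * (1 - p) ^ (K - k)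
      ≤ ∑ k ∈ Finset.Icc 1 K, c * g (k + 2) := by
    apply Finset.sum_le_sum
    intro k hk
    obtain ⟨hk1, hkK⟩ := Finset.mem_Icc.mp hk
    have hkpos : (0:ℝ) < (k:ℝ) := by exact_mod_cast hk1
    have hexp : K + 2 - (k + 2) = K - k := by omega
    -- nat identity
    have hid : (K+1)*(K+2)*(K.choose k) = (k+1)*(k+2)*((K+2).choose (k+2)) := by
      have h1 : (K+1) * K.choose k = (K+1).choose (k+1) * (k+1) :=
        Nat.add_one_mul_choose_eq K k
      have h2 : (K+2) * (K+1).choose (k+1) = (K+2).choose (k+2) * (k+2) :=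
        Nat.add_one_mul_choose_eq (K+1) (k+1)
      calc (K+1)*(K+2)*(K.choose k) = (K+2) * ((K+1) * K.choose k) := by ring
        _ = (K+2) * ((K+1).choose (k+1) * (k+1)) := by rw [h1]
        _ = ((K+2) * (K+1).choose (k+1)) * (k+1) := by ring
        _ = ((K+2).choose (k+2) * (k+2)) * (k+1) := by rw [h2]
        _ = (k+1)*(k+2)*((K+2).choose (k+2)) := by ring
    have hidR : (((K:ℝ))+1)*((K:ℝ)+2)*(K.choose k : ℝ)
        = ((k:ℝ)+1)*((k:ℝ)+2)*(((K+2).choose (k+2) : ℕ) : ℝ) := by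
      exact_mod_cast congrArg (fun n : ℕ => (n : ℝ)) hid
    -- coefficient inequality
    have hcoef : 1 / (k:ℝ)^2 * (K.choose k : ℝ)
        ≤ 6 * (((K+2).choose (k+2) : ℕ) : ℝ) / (((K:ℝ)+1)*((K:ℝ)+2)) := by
      rw [show 1 / (k:ℝ)^2 * (K.choose k : ℝ) = (K.choose k : ℝ) / (k:ℝ)^2 from by ring,
        div_le_div_iff₀ (by positivity) hKK]
      have hCnn : (0:ℝ) ≤ (((K+2).choose (k+2) : ℕ) : ℝ) := Nat.cast_nonneg _
      nlinarith [hidR, sq_nonneg ((k:ℝ) - 1), hkpos, hCnn,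
        mul_nonneg (mul_nonneg (sub_nonneg.mpr (by exact_mod_cast hk1 : (1:ℝ) ≤ (k:ℝ))) hkpos.le) hCnn]
    have hrw : c * g (k + 2)
        = (6 * (((K+2).choose (k+2) : ℕ) : ℝ) / (((K:ℝ)+1)*((K:ℝ)+2)))
          * (p ^ k * (1 - p) ^ (K - k)) := by
      simp only [hg, hc, hexp]
      have : p ^ (k + 2) = p ^ 2 * p ^ k := by ring
      rw [this]
      field_simp
    rw [hrw]
    have hLHS : 1 / (k:ℝ)^2 * (K.choose k : ℝ) * p ^ k * (1 - p) ^ (K - k)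
        = (1 / (k:ℝ)^2 * (K.choose k : ℝ)) * (p ^ k * (1 - p) ^ (K - k)) := by ring
    rw [hLHS]
    exact mul_le_mul_of_nonneg_right hcoef (by positivity)
  -- sum bound
  have step2 : ∑ k ∈ Finset.Icc 1 K, g (k + 2) ≤ 1 := by
    have hshift : ∑ k ∈ Finset.Icc 1 K, g (k + 2)
        = ∑ j ∈ Finset.Icc 3 (K + 2), g j := by
      rw [← Finset.map_add_right_Icc 1 K 2, Finset.sum_map]
      rfl
    rw [hshift]
    have hsub : Finset.Icc 3 (K + 2) ⊆ Finset.range (K + 3) := by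
      intro j hj
      simp only [Finset.mem_Icc] at hj
      simp only [Finset.mem_range]; omega
    have hle := Finset.sum_le_sum_of_subset_of_nonneg hsub
      (fun j _ _ => hgnn j)
    have hfull : ∑ j ∈ Finset.range (K + 3), g j = 1 := by
      simp only [hg]
      have hone : p + (1 - p) = 1 := by ring
      have hb : ∑ m ∈ Finset.range (K + 2 + 1),
          p ^ m * (1 - p) ^ (K + 2 - m) * ((K+2).choose m : ℝ) = 1 := by
        rw [← add_pow, hone, one_pow]
      refine Eq.trans (Finset.sum_congr rfl fun j _ => ?_) hb
      ring
    calc ∑ j ∈ Finset.Icc 3 (K + 2), g j ≤ ∑ j ∈ Finset.range (K + 3), g j := hle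
      _ = 1 := hfull
  calc ∑ k ∈ Finset.Icc 1 K,
      (1 / (k : ℝ) ^ 2) * (K.choose k : ℝ) * p ^ k * (1 - p) ^ (K - k)
      ≤ ∑ k ∈ Finset.Icc 1 K, c * g (k + 2) := step1
    _ = c * ∑ k ∈ Finset.Icc 1 K, g (k + 2) := by rw [Finset.mul_sum]
    _ ≤ c * 1 := mul_le_mul_of_nonneg_left step2 hcpos.le
    _ = c := mul_one c
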